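/- In the attracting basin setting, for every function g holomorphic on A(z0)∖{z0} and every open set D ⊂ A(z0)∖O^-(z0), one has ω(D, g, f) ⊆ H_Φ(D). -/

import Mathlib

open Set Filter Topology Function Metric TopologicalSpace

noncomputable section

/-- The chordal metric on the Riemann sphere `ℂ_∞ = OnePoint ℂ`. -/
def chordal (x y : OnePoint ℂ) : ℝ :=
  Option.elim x (Option.elim y 0 fun w => 2 / Real.sqrt (1 + ‖w‖ ^ 2))
    fun z => Option.elim y (2 / Real.sqrt (1 + ‖z‖ ^ 2))
      fun w => 2 * ‖z - w‖ / (Real.sqrt (1 + ‖z‖ ^ 2) * Real.sqrt (1 + ‖w‖ ^ 2))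

/-- The chordal distance from a point of the Riemann sphere to a set of points. -/
def chordalDistSet (x : OnePoint ℂ) (S : Set (OnePoint ℂ)) : ℝ :=
  sInf (chordal x '' S)

/-- `M ⊆ ℂ` has no holes iff `ℂ_∞ ∖ M` is connected. -/
def NoHoles (M : Set ℂ) : Prop :=
  IsConnected (((↑) '' M : Set (OnePoint ℂ))ᶜ)

/-- The boundary `∂_∞ Ω` of `Ω ⊆ ℂ` taken in the Riemann sphere. -/
def sphereBoundary (Ω : Set ℂ) : Set (OnePoint ℂ) :=
  frontier ((↑) '' Ω)

/-- `U_0(M)`: the nonempty open subsets of `M` having no holes. -/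
def U0 (M : Set ℂ) : Set (Set ℂ) :=
  {U | U.Nonempty ∧ IsOpen U ∧ U ⊆ M ∧ NoHoles U}

/-- `K_0(M)`: the nonempty compact subsets of `M` having no holes. -/
def K0 (M : Set ℂ) : Set (Set ℂ) :=
  {K | K.Nonempty ∧ IsCompact K ∧ K ⊆ M ∧ NoHoles K}

/-- `H(D)`: holomorphic functions on `D`, with the topology of locally uniform
convergence on `D` (induced from the compact-open topology on `C(D, ℂ)`). -/
def HolFun (D : Set ℂ) : Type := {g : ℂ → ℂ // DifferentiableOn ℂ g D}

instance (D : Set ℂ) : TopologicalSpace (HolFun D) :=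
  TopologicalSpace.induced
    (fun g : HolFun D => (⟨D.restrict g.1, g.2.continuousOn.restrict⟩ : C(D, ℂ)))
    inferInstance

/-- The orbit `{g ∘ f^n |_U : n ∈ ℕ}` is dense in `H(U)`,
i.e. `g` is `H(U)`-universal for the composition operator `C_f`. -/
def DenseOrbitIn (g f : ℂ → ℂ) (U : Set ℂ) : Prop :=
  Dense {h : HolFun U | ∃ n : ℕ, Set.EqOn h.1 (g ∘ f^[n]) U}

/-- The basin of attraction `A(z0)` of `z0` under `f`. -/
def attractingBasin (f : ℂ → ℂ) (z0 : ℂ) : Set ℂ :=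
  {z : ℂ | Tendsto (fun n : ℕ => f^[n] z) atTop (𝓝 z0)}

/-- The backward orbit `O⁻(z0)` of `z0` under `f`. -/
def backwardOrbit (f : ℂ → ℂ) (z0 : ℂ) : Set ℂ :=
  {z : ℂ | ∃ n : ℕ, n ≠ 0 ∧ f^[n] z = z0}

/-- `H_Φ(G) = {ψ ∘ Φ|_G : ψ ∈ H(Φ(G))}` (as functions, constrained on `G` only). -/
def HPhi (Φ : ℂ → ℂ) (G : Set ℂ) : Set (ℂ → ℂ) :=
  {h | ∃ ψ : ℂ → ℂ, DifferentiableOn ℂ ψ (Φ '' G) ∧ Set.EqOn h (ψ ∘ Φ) G}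

/-- `ω(G, g, f)`: limits of subsequences of `(g ∘ f^n)` locally uniformly on `G`. -/
def omegaSet (G : Set ℂ) (g f : ℂ → ℂ) : Set (ℂ → ℂ) :=
  {h | ∃ u : ℕ → ℕ, StrictMono u ∧
    TendstoLocallyUniformlyOn (fun (k : ℕ) (z : ℂ) => g (f^[u k] z)) h atTop G}

set_option maxHeartbeats 2000000 in
/-- Attracting basin setting: for every `g` holomorphic on `A(z0)∖{z0}` and every
open `D ⊆ A(z0) ∖ O⁻(z0)`, one has `ω(D, g, f) ⊆ H_Φ(D)`. -/
theorem omega_subset_HPhi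
    (f : ℂ → ℂ) (hf : Differentiable ℂ f)
    (hnl : ¬ ∃ a b : ℂ, f = fun z => a * z + b)
    (z0 : ℂ) (hfix : f z0 = z0)
    (hmul_pos : 0 < ‖deriv f z0‖) (hmul_lt : ‖deriv f z0‖ < 1)
    (Φ : ℂ → ℂ) (hΦd : DifferentiableOn ℂ Φ (attractingBasin f z0))
    (hΦconj : ∀ z ∈ attractingBasin f z0, Φ (f z) = deriv f z0 * Φ z)
    (U V : Set ℂ) (hU : IsOpen U) (hV : IsOpen V) (hz0U : z0 ∈ U) (h0V : (0 : ℂ) ∈ V)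
    (hUA : U ⊆ attractingBasin f z0) (hfU : MapsTo f U U)
    (hΦU : Set.BijOn Φ U V)
    (g : ℂ → ℂ) (hg : DifferentiableOn ℂ g (attractingBasin f z0 \ {z0}))
    (D : Set ℂ) (hDopen : IsOpen D)
    (hD : D ⊆ attractingBasin f z0 \ backwardOrbit f z0) :
    omegaSet D g f ⊆ HPhi Φ D := by
  classical
  set l : ℂ := deriv f z0 with hl
  have hfc : Continuous f := hf.continuous
  have hfitd : ∀ n : ℕ, Differentiable ℂ (f^[n]) := fun n => hf.iterate n
  have hfix_iter : ∀ n : ℕ, f^[n] z0 = z0 := fun n => Function.iterate_fixed hfix n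
  have hbd : ∀ z : ℂ, z ∈ attractingBasin f z0 ↔
      Tendsto (fun n : ℕ => f^[n] z) atTop (𝓝 z0) := fun z => Iff.rfl
  set c : ℝ := (1 + ‖l‖) / 2 with hc
  have hc0 : 0 ≤ c := by positivity
  have hc1 : c < 1 := by rw [hc]; linarith
  -- a contraction ball inside U
  obtain ⟨r, hr0, hball⟩ : ∃ r > 0, ∀ w ∈ ball z0 r,
      w ∈ U ∧ ‖f w - z0‖ ≤ c * ‖w - z0‖ := by
    have hde : HasDerivAt f l z0 := (hf z0).hasDerivAt
    have hlo := hasDerivAt_iff_isLittleO.mp hde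
    have hε : (0 : ℝ) < (1 - ‖l‖) / 2 := by linarith
    have hev1 := Asymptotics.isLittleO_iff.mp hlo hε
    have hev2 : ∀ᶠ w in 𝓝 z0, w ∈ U := eventually_of_mem (hU.mem_nhds hz0U) fun _ h => h
    obtain ⟨r, hr0, hr⟩ := Metric.eventually_nhds_iff_ball.mp (hev2.and hev1)
    refine ⟨r, hr0, fun w hw => ⟨(hr w hw).1, ?_⟩⟩
    have h2 := (hr w hw).2
    rw [hfix] at h2
    have h3 : f w - z0 = (f w - z0 - (w - z0) • l) + (w - z0) • l := by
      rw [smul_eq_mul]; ring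
    calc ‖f w - z0‖ = ‖(f w - z0 - (w - z0) • l) + (w - z0) • l‖ := by rw [← h3]
      _ ≤ ‖f w - z0 - (w - z0) • l‖ + ‖(w - z0) • l‖ := norm_add_le _ _
      _ ≤ (1 - ‖l‖) / 2 * ‖w - z0‖ + ‖w - z0‖ * ‖l‖ :=
          add_le_add h2 (le_of_eq (norm_smul _ _))
      _ = c * ‖w - z0‖ := by rw [hc]; ring
  have hball_inv : ∀ w ∈ ball z0 r, f w ∈ ball z0 r := by
    intro w hw
    have h1 := (hball w hw).2
    have h2 : ‖w - z0‖ < r := by rwa [mem_ball, dist_eq_norm] at hw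
    rw [mem_ball, dist_eq_norm]
    calc ‖f w - z0‖ ≤ c * ‖w - z0‖ := h1
      _ ≤ ‖w - z0‖ := mul_le_of_le_one_left (norm_nonneg _) hc1.le
      _ < r := h2
  have hiter_ball : ∀ w ∈ ball z0 r, ∀ n : ℕ,
      f^[n] w ∈ ball z0 r ∧ ‖f^[n] w - z0‖ ≤ c ^ n * ‖w - z0‖ := by
    intro w hw n
    induction n with
    | zero => simpa using hw
    | succ n ih =>
      refine ⟨by rw [Function.iterate_succ_apply']; exact hball_inv _ ih.1, ?_⟩
      rw [Function.iterate_succ_apply']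
      calc ‖f (f^[n] w) - z0‖ ≤ c * ‖f^[n] w - z0‖ := (hball _ ih.1).2
        _ ≤ c * (c ^ n * ‖w - z0‖) := by gcongr; exact ih.2
        _ = c ^ (n + 1) * ‖w - z0‖ := by ring
  have hball_basin : ball z0 r ⊆ attractingBasin f z0 := by
    intro w hw
    rw [hbd, tendsto_iff_norm_sub_tendsto_zero]
    have h0 : Tendsto (fun n : ℕ => c ^ n * ‖w - z0‖) atTop (𝓝 0) := by
      simpa using (tendsto_pow_atTop_nhds_zero_of_lt_one hc0 hc1).mul_const ‖w - z0‖
    exact squeeze_zero (fun n => norm_nonneg _) (fun n => (hiter_ball w hw n).2) h0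
  have hbasin_mem_iter : ∀ z ∈ attractingBasin f z0,
      ∀ᶠ n : ℕ in atTop, f^[n] z ∈ ball z0 r := by
    intro z hz
    exact ((hbd z).mp hz).eventually (eventually_mem_set.mpr (ball_mem_nhds z0 hr0))
  have hbasin_open : IsOpen (attractingBasin f z0) := by
    rw [isOpen_iff_mem_nhds]
    intro z hz
    obtain ⟨N, hN⟩ := (hbasin_mem_iter z hz).exists
    refine mem_of_superset ((hfc.iterate N).continuousAt.preimage_mem_nhds (isOpen_ball.mem_nhds hN)) ?_
    intro s hs
    rw [hbd]
    have h1 : Tendsto (fun n : ℕ => f^[n] (f^[N] s)) atTop (𝓝 z0) :=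
      (hbd _).mp (hball_basin hs)
    have h2 : Tendsto (fun n : ℕ => f^[n + N] s) atTop (𝓝 z0) := by
      simpa [Function.iterate_add_apply] using h1
    exact (tendsto_add_atTop_iff_nat N).mp h2
  have hbasin_inv : ∀ z ∈ attractingBasin f z0, f z ∈ attractingBasin f z0 := by
    intro z hz
    rw [hbd]
    have h1 : Tendsto (fun n : ℕ => f^[n + 1] z) atTop (𝓝 z0) :=
      (tendsto_add_atTop_iff_nat 1).mpr ((hbd z).mp hz)
    simpa [Function.iterate_succ_apply] using h1
  have hiter_basin : ∀ z ∈ attractingBasin f z0, ∀ n : ℕ,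
      f^[n] z ∈ attractingBasin f z0 := by
    intro z hz n
    induction n with
    | zero => simpa using hz
    | succ n ih => rw [Function.iterate_succ_apply']; exact hbasin_inv _ ih
  have hΦiter : ∀ z ∈ attractingBasin f z0, ∀ n : ℕ, Φ (f^[n] z) = l ^ n * Φ z := by
    intro z hz n
    induction n with
    | zero => simp
    | succ n ih =>
      rw [Function.iterate_succ_apply', hΦconj _ (hiter_basin z hz n), ih]
      ring
  have hDsub : ∀ z ∈ D, z ∈ attractingBasin f z0 := fun z hz => (hD hz).1
  have hDnz : ∀ z ∈ D, ∀ n : ℕ, f^[n] z ≠ z0 := by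
    intro z hz n h
    match n with
    | 0 =>
      simp only [Function.iterate_zero_apply] at h
      exact (hD hz).2 ⟨1, one_ne_zero, by simp [h, hfix]⟩
    | n + 1 => exact (hD hz).2 ⟨n + 1, Nat.succ_ne_zero n, h⟩
  have hΦanB : AnalyticOnNhd ℂ Φ (attractingBasin f z0) :=
    hΦd.analyticOnNhd hbasin_open
  have hΦ'an : AnalyticOnNhd ℂ (deriv Φ) (attractingBasin f z0) := hΦanB.deriv
  -- Φ is not locally constant at any point of D
  have hnc : ∀ z ∈ D, ¬ (∀ᶠ w in 𝓝 z, Φ w = Φ z) := by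
    intro z hz hev
    obtain ⟨N, hNball, hN1⟩ :=
      ((hbasin_mem_iter z (hDsub z hz)).and (eventually_ge_atTop 1)).exists
    have hev2 : ∀ᶠ w in 𝓝 z, f^[N] w = f^[N] z := by
      have h1 : ∀ᶠ w in 𝓝 z, w ∈ attractingBasin f z0 :=
        eventually_of_mem (hbasin_open.mem_nhds (hDsub z hz)) fun _ h => h
      have h2 : ∀ᶠ w in 𝓝 z, f^[N] w ∈ ball z0 r :=
        (hfc.iterate N).continuousAt.preimage_mem_nhds (isOpen_ball.mem_nhds hNball)
      filter_upwards [hev, h1, h2] with w hw hwB hwb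
      refine hΦU.injOn ((hball _ hwb).1) ((hball _ hNball).1) ?_
      rw [hΦiter w hwB N, hΦiter z (hDsub z hz) N, hw]
    have hA : AnalyticOnNhd ℂ (f^[N]) univ := fun x _ => (hfitd N).analyticAt x
    have hB : AnalyticOnNhd ℂ (fun _ : ℂ => f^[N] z) univ := analyticOnNhd_const
    have heqz := hA.eqOn_of_preconnected_of_eventuallyEq hB isPreconnected_univ
      (mem_univ z) hev2 (mem_univ z0)
    rw [hfix_iter N] at heqz
    exact (hD hz).2 ⟨N, by omega, heqz.symm⟩
  -- main argument
  rintro h ⟨u, hu, hTL⟩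
  have hu' : Tendsto u atTop atTop := hu.tendsto_atTop
  have hdiffk : ∀ k : ℕ, DifferentiableOn ℂ (fun z => g (f^[u k] z)) D := by
    intro k
    refine DifferentiableOn.comp hg ((hfitd (u k)).differentiableOn) ?_
    intro z hz
    exact ⟨hiter_basin z (hDsub z hz) (u k), hDnz z hz (u k)⟩
  have h_hol : DifferentiableOn ℂ h D :=
    hTL.differentiableOn (Eventually.of_forall hdiffk) hDopen
  have h_well : ∀ z1 ∈ D, ∀ z2 ∈ D, Φ z1 = Φ z2 → h z1 = h z2 := by
    intro z1 h1 z2 h2 he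
    have e1 := hTL.tendsto_at h1
    have e2 := hTL.tendsto_at h2
    have hev : ∀ᶠ k in atTop, g (f^[u k] z1) = g (f^[u k] z2) := by
      have hboth := (hbasin_mem_iter z1 (hDsub _ h1)).and (hbasin_mem_iter z2 (hDsub _ h2))
      filter_upwards [hu'.eventually hboth] with k hk
      congr 1
      refine hΦU.injOn ((hball _ hk.1).1) ((hball _ hk.2).1) ?_
      rw [hΦiter _ (hDsub _ h1), hΦiter _ (hDsub _ h2), he]
    exact tendsto_nhds_unique (e1.congr' hev) e2
  set ψ : ℂ → ℂ := fun w => h (Function.invFunOn Φ D w) with hψdef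
  have hψΦ : ∀ z ∈ D, ψ (Φ z) = h z := by
    intro z hz
    have hmem : Function.invFunOn Φ D (Φ z) ∈ D := Function.invFunOn_mem ⟨z, hz, rfl⟩
    have heq : Φ (Function.invFunOn Φ D (Φ z)) = Φ z := Function.invFunOn_eq ⟨z, hz, rfl⟩
    exact h_well _ hmem _ hz heq
  -- ψ is differentiable at images of non-critical points of Φ
  have good : ∀ ζ ∈ D, deriv Φ ζ ≠ 0 → DifferentiableAt ℂ ψ (Φ ζ) := by
    intro ζ hζ hd
    have han : AnalyticAt ℂ Φ ζ := hΦanB ζ (hDsub ζ hζ)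
    have hsd : HasStrictDerivAt Φ (deriv Φ ζ) ζ := by
      have h1 := han.hasStrictFDerivAt.hasStrictDerivAt
      rwa [fderiv_apply_one_eq_deriv] at h1
    have hE := hsd.hasStrictFDerivAt_equiv hd
    set L := hE.localInverse Φ _ ζ with hLdef
    have hL0 : L (Φ ζ) = ζ := hE.localInverse_apply_image
    have hLd : DifferentiableAt ℂ L (Φ ζ) := hE.to_localInverse.differentiableAt
    have hev1 : ∀ᶠ w in 𝓝 (Φ ζ), Φ (L w) = w := hE.eventually_right_inverse
    have hev2 : ∀ᶠ w in 𝓝 (Φ ζ), L w ∈ D := by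
      refine hLd.continuousAt.preimage_mem_nhds ?_
      rw [hL0]
      exact hDopen.mem_nhds hζ
    have heq : ψ =ᶠ[𝓝 (Φ ζ)] (h ∘ L) := by
      filter_upwards [hev1, hev2] with w hw1 hw2
      have := hψΦ _ hw2
      rw [hw1] at this
      exact this.symm ▸ rfl
    have hcomp : DifferentiableAt ℂ (h ∘ L) (Φ ζ) := by
      refine DifferentiableAt.comp _ ?_ hLd
      rw [hL0]
      exact h_hol.differentiableAt (hDopen.mem_nhds hζ)
    exact heq.differentiableAt_iff.mpr hcomp
  refine ⟨ψ, ?_, fun z hz => (hψΦ z hz).symm⟩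
  rintro w ⟨z, hz, rfl⟩
  suffices hh : DifferentiableAt ℂ ψ (Φ z) from hh.differentiableWithinAt
  have hzB := hDsub z hz
  -- open mapping theorem at z
  have homt : 𝓝 (Φ z) ≤ map Φ (𝓝 z) := by
    rcases (hΦanB z hzB).eventually_constant_or_nhds_le_map_nhds with hcst | hle
    · exact absurd hcst (hnc z hz)
    · exact hle
  -- continuity of ψ at Φ z
  have hcont : ContinuousAt ψ (Φ z) := by
    have hhc : ContinuousAt h z := (h_hol.differentiableAt (hDopen.mem_nhds hz)).continuousAt
    have heq : h =ᶠ[𝓝 z] (ψ ∘ Φ) := by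
      filter_upwards [eventually_of_mem (hDopen.mem_nhds hz) fun _ hw => hw] with w hw
      exact (hψΦ w hw).symm
    have h1 : Tendsto (ψ ∘ Φ) (𝓝 z) (𝓝 (ψ (Φ z))) := by
      rw [hψΦ z hz]
      exact Tendsto.congr' heq hhc
    have h2 : Tendsto ψ (map Φ (𝓝 z)) (𝓝 (ψ (Φ z))) := by rwa [tendsto_map'_iff]
    exact h2.mono_left homt
  -- ψ is differentiable on a punctured neighborhood of Φ z
  have hpunct : ∀ᶠ w in 𝓝[≠] (Φ z), DifferentiableAt ℂ ψ w := by
    have hder : ∀ᶠ w in 𝓝[≠] z, deriv Φ w ≠ 0 := by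
      rcases (hΦ'an z hzB).eventually_eq_zero_or_eventually_ne_zero with h0 | h1
      · exfalso
        apply hnc z hz
        have hbas : ∀ᶠ w in 𝓝 z, w ∈ attractingBasin f z0 :=
          eventually_of_mem (hbasin_open.mem_nhds hzB) fun _ hh => hh
        obtain ⟨ε, hε0, hε⟩ := Metric.eventually_nhds_iff_ball.mp (h0.and hbas)
        have hconst : ∀ w ∈ ball z ε, Φ w = Φ z := by
          intro w hw
          refine (convex_ball z ε).is_const_of_fderivWithin_eq_zero
            (hΦd.mono fun x hx => (hε x hx).2) ?_ hw (mem_ball_self hε0)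
          intro x hx
          rw [fderivWithin_of_isOpen isOpen_ball hx]
          ext y
          simp [← toSpanSingleton_deriv, (hε x hx).1]
        exact Metric.eventually_nhds_iff_ball.mpr ⟨ε, hε0, hconst⟩
      · exact h1
    have hmem : ∀ᶠ w in 𝓝 z, w ∈ D :=
      eventually_of_mem (hDopen.mem_nhds hz) fun _ hh => hh
    rw [eventually_nhdsWithin_iff] at hder
    obtain ⟨ε, hε0, hε⟩ := Metric.eventually_nhds_iff_ball.mp (hder.and hmem)
    have himg : Φ '' ball z ε ∈ 𝓝 (Φ z) := by
      apply homt
      rw [mem_map]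
      exact mem_of_superset (ball_mem_nhds z hε0) (subset_preimage_image Φ _)
    rw [eventually_nhdsWithin_iff]
    filter_upwards [himg] with w hw hwne
    obtain ⟨ζ, hζb, rfl⟩ := hw
    have hζz : ζ ≠ z := by
      rintro rfl
      exact hwne rfl
    exact good ζ (hε ζ hζb).2 ((hε ζ hζb).1 (by simpa using hζz))
  exact (Complex.analyticAt_of_differentiable_on_punctured_nhds_of_continuousAt
    hpunct hcont).differentiableAt
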